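/- Let s > 0, α ∈ (0,π], and let ψ be analytic on D_{s,α} with ψ(z)/(−z·Log z) → 1 as z → 0 within D_{s,α}. Then for every β ∈ (0,α) there exist ρ ∈ (0,s) and ρ′ > 0 such that every point y ∈ D_{ρ′,β} has exactly one preimage under ψ in D_{ρ,α}, i.e. there is a unique z ∈ D_{ρ,α} with ψ(z) = y. -/

import Mathlib

open Filter Topology

/-- The domain `D_{s,α} = {z ∈ ℂ : 0 < |z| < s and |Arg z| < α}`. -/
def Ddom (s α : ℝ) : Set ℂ :=
  {z : ℂ | 0 < ‖z‖ ∧ ‖z‖ < s ∧ |Complex.arg z| < α}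

lemma aux_arg_le {w : ℂ} {M : ℝ} (hM : 0 < M) (hre : M ≤ w.re) (him : |w.im| ≤ Real.pi) :
    |Complex.arg w| ≤ 8 / M := by
  have hre0 : 0 < w.re := lt_of_lt_of_le hM hre
  have hz : w ≠ 0 := fun h => by simp [h] at hre0
  have habs : 0 < ‖w‖ := norm_pos_iff.mpr hz
  have habsre : w.re ≤ ‖w‖ := Complex.re_le_norm w
  have harg2 : |Complex.arg w| < Real.pi / 2 :=
    Complex.abs_arg_lt_pi_div_two_iff.2 (Or.inl hre0)
  have h1 : 2 / Real.pi * |Complex.arg w| ≤ |Real.sin (Complex.arg w)| :=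
    Real.mul_abs_le_abs_sin harg2.le
  have h2 : |Real.sin (Complex.arg w)| = |w.im| / ‖w‖ := by
    rw [Complex.sin_arg, abs_div, abs_of_pos habs]
  have h3 : |w.im| / ‖w‖ ≤ Real.pi / M := by
    exact div_le_div₀ (by positivity) him hM (le_trans hre habsre)
  have hpi : Real.pi ≤ 4 := Real.pi_le_four
  have hpi0 : 0 < Real.pi := Real.pi_pos
  rw [h2] at h1
  have := h1.trans h3
  rw [div_mul_eq_mul_div, div_le_div_iff₀ hpi0 hM] at this
  rw [le_div_iff₀ hM]
  nlinarith [abs_nonneg (Complex.arg w)]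

lemma aux_norm_log_le {z : ℂ} (hz : z ≠ 0) :
    ‖Complex.log z‖ ≤ |Real.log (‖z‖)| + Real.pi := by
  refine (Complex.norm_le_abs_re_add_abs_im _).trans ?_
  rw [Complex.log_re, Complex.log_im]
  exact add_le_add le_rfl (Complex.abs_arg_le_pi z)

lemma aux_cauchy {g : ℂ → ℂ} {w : ℂ} {d e : ℝ} (hd : 0 < d) (he : 0 < e)
    (hdiff : DifferentiableOn ℂ g (Metric.ball w d))
    (hb : ∀ x ∈ Metric.ball w d, ‖g x‖ ≤ e) : ‖deriv g w‖ ≤ 3 * e / d := by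
  refine Complex.norm_deriv_le_div_of_mapsTo_ball hdiff ?_ hd
  intro x hx
  have h1 := hb x hx
  have h2 := hb w (Metric.mem_ball_self hd)
  have : ‖g x - g w‖ < 3 * e := by
    calc ‖g x - g w‖ ≤ ‖g x‖ + ‖g w‖ := norm_sub_le _ _
      _ < 3 * e := by linarith
  simpa [Metric.mem_ball, dist_eq_norm] using this.le

set_option maxHeartbeats 2000000 in
/-- If `ψ` is analytic on `D_{s,α}` and `ψ(z) ∼ −z·Log z` as `z → 0` in `D_{s,α}`, then for
every `β ∈ (0,α)` there are `ρ ∈ (0,s)` and `ρ' > 0` such that every `y ∈ D_{ρ',β}` has a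
unique preimage under `ψ` in `D_{ρ,α}`. -/
theorem stmt_4 (s α : ℝ) (hs : 0 < s) (hα₁ : 0 < α) (hα₂ : α ≤ Real.pi)
    (ψ : ℂ → ℂ) (hψ : AnalyticOnNhd ℂ ψ (Ddom s α))
    (hasym : Tendsto (fun z : ℂ => ψ z / (-z * Complex.log z))
      (𝓝[Ddom s α] 0) (𝓝 1)) :
    ∀ β : ℝ, 0 < β → β < α →
      ∃ ρ ρ' : ℝ, 0 < ρ ∧ ρ < s ∧ 0 < ρ' ∧
        ∀ y ∈ Ddom ρ' β, ∃! z : ℂ, z ∈ Ddom ρ α ∧ ψ z = y := by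
  intro β hβ0 hβα
  have hπ0 : (0:ℝ) < Real.pi := Real.pi_pos
  have hπ4 : Real.pi ≤ 4 := Real.pi_le_four
  have hβπ : β < Real.pi := lt_of_lt_of_le hβα hα₂
  -- the angular margin δ
  set δ : ℝ := min ((α - β)/2) (min ((Real.pi - β)/2) 1) with hδ_def
  have hδ0 : 0 < δ := by
    refine lt_min (by linarith) (lt_min (by linarith) one_pos)
  have hδ1 : δ ≤ 1 := (min_le_right _ _).trans (min_le_right _ _)
  have hδa : β + 2*δ ≤ α := by
    have := min_le_left ((α - β)/2) (min ((Real.pi - β)/2) 1); linarith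
  have hδp : β + 2*δ ≤ Real.pi := by
    have := (min_le_right ((α - β)/2) (min ((Real.pi - β)/2) 1)).trans
      (min_le_left ((Real.pi - β)/2) 1); linarith
  -- choose r with asymptotic control
  rw [Metric.tendsto_nhdsWithin_nhds] at hasym
  obtain ⟨r₀, hr₀0, hr₀⟩ := hasym (δ/200) (by positivity)
  set r : ℝ := min r₀ (min s (1/2)) with hr_def
  have hr0 : 0 < r := lt_min hr₀0 (lt_min hs (by norm_num))
  have hrr₀ : r ≤ r₀ := min_le_left _ _
  have hrs : r ≤ s := (min_le_right _ _).trans (min_le_left _ _)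
  have hrhalf : r ≤ 1/2 := (min_le_right _ _).trans (min_le_right _ _)
  have hlogr : Real.log r < 0 := Real.log_neg hr0 (by linarith)
  -- the half-strip W in logarithmic coordinates
  set W : Set ℂ := {w : ℂ | w.re < Real.log r ∧ |w.im| < α} with hW_def
  have hWim : ∀ w ∈ W, Complex.arg (Complex.exp w) = w.im := by
    intro w hw
    have h1 : -Real.pi < w.im := by
      have := (abs_lt.1 hw.2).1; linarith [hα₂]
    have h2 : w.im ≤ Real.pi := by
      have := (abs_lt.1 hw.2).2; linarith [hα₂]
    have := Complex.log_exp h1 h2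
    rw [← Complex.log_im, this]
  have hWabs : ∀ w ∈ W, ‖(Complex.exp w)‖ < r := by
    intro w hw
    rw [Complex.norm_exp]
    calc Real.exp w.re < Real.exp (Real.log r) := Real.exp_lt_exp.2 hw.1
      _ = r := Real.exp_log hr0
  have hWmem : ∀ w ∈ W, Complex.exp w ∈ Ddom s α := by
    intro w hw
    refine ⟨norm_pos_iff.mpr (Complex.exp_ne_zero w), lt_of_lt_of_le (hWabs w hw) hrs, ?_⟩
    rw [hWim w hw]; exact hw.2
  have hWne : ∀ w ∈ W, w ≠ 0 := by
    intro w hw h0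
    rw [h0] at hw
    exact absurd hw.1 (by simp; linarith)
  have hWq : ∀ w ∈ W, ‖ψ (Complex.exp w) / (-(Complex.exp w) * w) - 1‖ < δ/200 := by
    intro w hw
    have h1 : -Real.pi < w.im := by have := (abs_lt.1 hw.2).1; linarith [hα₂]
    have h2 : w.im ≤ Real.pi := by have := (abs_lt.1 hw.2).2; linarith [hα₂]
    have hlog : Complex.log (Complex.exp w) = w := Complex.log_exp h1 h2
    have := hr₀ (hWmem w hw) (by
      rw [dist_zero_right]
      exact lt_of_lt_of_le (hWabs w hw) hrr₀)
    rw [dist_eq_norm, hlog] at this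
    exact this
  -- the logarithm of the quotient
  set gg : ℂ → ℂ := fun w => Complex.log (ψ (Complex.exp w) / (-(Complex.exp w) * w))
    with hgg_def
  set hh : ℂ → ℂ := fun w => Complex.log (-w) + gg w with hhh_def
  have hWden : ∀ w ∈ W, -(Complex.exp w) * w ≠ 0 := by
    intro w hw
    exact mul_ne_zero (neg_ne_zero.2 (Complex.exp_ne_zero w)) (hWne w hw)
  have hWq0 : ∀ w ∈ W, ψ (Complex.exp w) / (-(Complex.exp w) * w) ≠ 0 := by
    intro w hw h0
    have := hWq w hw
    rw [h0] at this
    simp at this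
    linarith
  have hgb : ∀ w ∈ W, ‖gg w‖ ≤ δ/100 := by
    intro w hw
    have hq := hWq w hw
    have : gg w = Complex.log (1 + (ψ (Complex.exp w) / (-(Complex.exp w) * w) - 1)) := by
      rw [hgg_def]; ring_nf
    rw [this]
    have := Complex.norm_log_one_add_half_le_self
      (z := ψ (Complex.exp w) / (-(Complex.exp w) * w) - 1) (by linarith)
    linarith
  have hWqre : ∀ w ∈ W, 0 < (ψ (Complex.exp w) / (-(Complex.exp w) * w)).re := by
    intro w hw
    have hq := hWq w hw
    have h1 : |(ψ (Complex.exp w) / (-(Complex.exp w) * w) - 1).re| ≤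
        ‖ψ (Complex.exp w) / (-(Complex.exp w) * w) - 1‖ := by
      exact Complex.abs_re_le_norm _
    have h2 : (ψ (Complex.exp w) / (-(Complex.exp w) * w) - 1).re =
        (ψ (Complex.exp w) / (-(Complex.exp w) * w)).re - 1 := by simp
    rw [h2] at h1
    have := abs_le.1 h1
    linarith [this.1]
  have hgd : ∀ w ∈ W, DifferentiableAt ℂ gg w := by
    intro w hw
    have hψd : DifferentiableAt ℂ (fun w => ψ (Complex.exp w)) w :=
      ((hψ _ (hWmem w hw)).differentiableAt).comp w Complex.differentiable_exp.differentiableAt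
    have hdend : DifferentiableAt ℂ (fun w : ℂ => -(Complex.exp w) * w) w :=
      (Complex.differentiable_exp.differentiableAt.neg).mul differentiableAt_id
    have hqd : DifferentiableAt ℂ
        (fun w => ψ (Complex.exp w) / (-(Complex.exp w) * w)) w :=
      hψd.div hdend (hWden w hw)
    exact ((Complex.hasDerivAt_log
      (Complex.mem_slitPlane_iff.2 (Or.inl (hWqre w hw)))).differentiableAt).comp w hqd
  have hψexp : ∀ w ∈ W, ψ (Complex.exp w) = Complex.exp (w + hh w) := by
    intro w hw
    have h1 : Complex.exp (gg w) = ψ (Complex.exp w) / (-(Complex.exp w) * w) :=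
      Complex.exp_log (hWq0 w hw)
    have h2 : Complex.exp (Complex.log (-w)) = -w :=
      Complex.exp_log (neg_ne_zero.2 (hWne w hw))
    rw [hhh_def]
    simp only []
    rw [show w + (Complex.log (-w) + gg w)
        = w + Complex.log (-w) + gg w by ring]
    rw [Complex.exp_add, Complex.exp_add, h1, h2]
    rw [div_eq_mul_inv, mul_inv]
    have hexpne := Complex.exp_ne_zero w
    have hwne := hWne w hw
    field_simp
  -- the cutoff M and the radius ρ
  set M : ℝ := max (200/δ) (4 - Real.log r) with hM_def
  have hM1 : 200/δ ≤ M := le_max_left _ _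
  have hM2 : -M ≤ Real.log r - 4 := by
    have := le_max_right (200/δ) (4 - Real.log r); linarith
  have hM200 : 200 ≤ M := by
    have : 200 ≤ 200/δ := by
      rw [le_div_iff₀ hδ0]; nlinarith
    linarith
  have hM0 : (0:ℝ) < M := by linarith
  set ρ : ℝ := Real.exp (-M) with hρ_def
  have hρ0 : 0 < ρ := Real.exp_pos _
  have hρr : ρ < r := by
    calc ρ ≤ Real.exp (Real.log r - 4) := Real.exp_le_exp.2 hM2
      _ < Real.exp (Real.log r) := Real.exp_lt_exp.2 (by linarith)
      _ = r := Real.exp_log hr0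
  have hρs : ρ < s := lt_of_lt_of_le hρr hrs
  have hlogρ : Real.log ρ = -M := Real.log_exp _
  -- the convex region C
  set C : Set ℂ := {w : ℂ | w.re < -M + 1 ∧ |w.im| < β + δ} with hC_def
  have hCconv : Convex ℝ C := by
    have hset : C = {w : ℂ | w.re < -M + 1} ∩
        ({w : ℂ | -(β+δ) < w.im} ∩ {w : ℂ | w.im < β + δ}) := by
      ext w
      simp only [hC_def, Set.mem_setOf_eq, Set.mem_inter_iff, abs_lt]
      try tauto
    rw [hset]
    exact (convex_halfSpace_re_lt _).inter
      ((convex_halfSpace_im_gt _).inter (convex_halfSpace_im_lt _))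
  have hCball : ∀ w ∈ C, Metric.ball w δ ⊆ W := by
    intro w hw x hx
    rw [Metric.mem_ball, dist_eq_norm] at hx
    have hre : |x.re - w.re| ≤ ‖x - w‖ := by
      rw [show x.re - w.re = (x - w).re by simp]
      exact Complex.abs_re_le_norm _
    have him : |x.im - w.im| ≤ ‖x - w‖ := by
      rw [show x.im - w.im = (x - w).im by simp]
      exact Complex.abs_im_le_norm _
    constructor
    · have := (abs_le.1 hre).2
      have hwre := hw.1
      have := hM2
      linarith [(abs_lt.1 (lt_of_le_of_lt hre hx)).2]
    · have h1 : |x.im| ≤ |w.im| + |x.im - w.im| := by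
        calc |x.im| = |w.im + (x.im - w.im)| := by ring_nf
          _ ≤ |w.im| + |x.im - w.im| := abs_add_le _ _
      have := lt_of_le_of_lt him hx
      have hwim := hw.2
      calc |x.im| ≤ |w.im| + |x.im - w.im| := h1
        _ < (β + δ) + δ := by linarith
        _ ≤ α := by linarith
  have hCW : C ⊆ W := by
    intro w hw
    exact hCball w hw (Metric.mem_ball_self hδ0)
  -- derivative bound for hh on C
  have hhd : ∀ w ∈ C, HasDerivAt hh (w⁻¹ + deriv gg w) w := by
    intro w hw
    have hwne : w ≠ 0 := hWne w (hCW hw)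
    have hreneg : w.re < 0 := by
      have := hw.1; have := hM0; linarith
    have hslit : -w ∈ Complex.slitPlane := by
      rw [Complex.mem_slitPlane_iff]
      left; simp; linarith
    have hlogd : HasDerivAt (fun w : ℂ => Complex.log (-w)) (w⁻¹) w := by
      have := (Complex.hasDerivAt_log hslit).comp w (hasDerivAt_neg w)
      simpa [Function.comp_def, inv_neg] using this
    exact hlogd.add ((hgd w (hCW hw)).hasDerivAt)
  have hhb : ∀ w ∈ C, ‖w⁻¹ + deriv gg w‖ ≤ 1/20 := by
    intro w hw
    have hwre : w.re < -M + 1 := hw.1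
    have habs : M - 1 ≤ ‖w‖ := by
      calc M - 1 ≤ |w.re| := by rw [abs_of_neg (by linarith)]; linarith
        _ ≤ ‖w‖ := Complex.abs_re_le_norm w
    have hwne : w ≠ 0 := hWne w (hCW hw)
    have hinv : ‖w⁻¹‖ ≤ 1/100 := by
      rw [norm_inv]
      rw [inv_le_comm₀ (norm_pos_iff.mpr hwne) (by norm_num)]
      linarith
    have hderg : ‖deriv gg w‖ ≤ 3 * (δ/100) / δ := by
      refine aux_cauchy hδ0 (by positivity) ?_ ?_
      · intro x hx
        exact ((hgd x (hCball w hw hx))).differentiableWithinAt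
      · intro x hx
        exact hgb x (hCball w hw hx)
    have : 3 * (δ/100) / δ = 3/100 := by field_simp
    rw [this] at hderg
    calc ‖w⁻¹ + deriv gg w‖ ≤ ‖w⁻¹‖ + ‖deriv gg w‖ := norm_add_le _ _
      _ ≤ 1/20 := by linarith
  have hLip : ∀ w₁ ∈ C, ∀ w₂ ∈ C, ‖hh w₁ - hh w₂‖ ≤ (1/20) * ‖w₁ - w₂‖ := by
    intro w₁ hw₁ w₂ hw₂
    refine hCconv.norm_image_sub_le_of_norm_hasFDerivWithin_le
      (f' := fun x => ContinuousLinearMap.smulRight (1 : ℂ →L[ℂ] ℂ) (x⁻¹ + deriv gg x))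
      (fun x hx => ((hhd x hx).hasFDerivAt).hasFDerivWithinAt) ?_ hw₂ hw₁
    intro x hx
    rw [ContinuousLinearMap.norm_smulRight_apply]
    have h1 : ‖(1 : ℂ →L[ℂ] ℂ)‖ = 1 := by
      rw [ContinuousLinearMap.one_def, ContinuousLinearMap.norm_id]
    rw [h1, one_mul]
    exact hhb x hx
  -- choose the radius ρ'
  set K : ℝ := max (max 256 (200/δ)) (2*M + 1) with hK_def
  have hK256 : (256:ℝ) ≤ K := (le_max_left _ _).trans (le_max_left _ _)
  have hKδ : 200/δ ≤ K := (le_max_right _ _).trans (le_max_left _ _)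
  have hKM : 2*M + 1 ≤ K := le_max_right _ _
  refine ⟨ρ, Real.exp (-K), hρ0, hρs, Real.exp_pos _, ?_⟩
  intro y hy
  obtain ⟨hy0, hy1, hy2⟩ := hy
  have hyne : y ≠ 0 := norm_ne_zero_iff.1 (ne_of_gt hy0)
  set x : ℝ := -Real.log (‖y‖) with hx_def
  have hxK : K < x := by
    have := Real.log_lt_log hy0 hy1
    rw [Real.log_exp] at this
    rw [hx_def]; linarith
  have hx256 : (256:ℝ) ≤ x := by linarith
  have hxδ : 200/δ ≤ x := by linarith
  have hxM : 2*M + 1 ≤ x := by linarith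
  have hxδ' : 16/x ≤ 2*δ/25 := by
    rw [div_le_div_iff₀ (by linarith) (by norm_num)]
    have h16 : (0:ℝ) < 16 := by norm_num
    have h200 : 200 ≤ δ * x := by
      rw [div_le_iff₀ hδ0] at hxδ; linarith [hxδ]
    nlinarith [h200, hδ0.le]
  have hsqx : (16:ℝ) ≤ Real.sqrt x := by
    rw [show (16:ℝ) = Real.sqrt 256 by
      rw [show (256:ℝ) = 16^2 by norm_num, Real.sqrt_sq (by norm_num)]]
    exact Real.sqrt_le_sqrt hx256
  have hlog2x : Real.log (2*x) ≤ x/8 - 1 := by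
    have hx0 : (0:ℝ) < x := by linarith
    have h1 : Real.log (2*x) = Real.log 2 + Real.log x :=
      Real.log_mul (by norm_num) (by linarith)
    have h2 : Real.log 2 ≤ 1 := by
      have := Real.log_le_sub_one_of_pos (x := 2) (by norm_num); linarith
    have h3 : Real.log x = 2 * Real.log (Real.sqrt x) := by
      rw [Real.log_sqrt hx0.le]; ring
    have h4 : Real.log (Real.sqrt x) ≤ Real.sqrt x - 1 :=
      Real.log_le_sub_one_of_pos (Real.sqrt_pos.2 hx0)
    have h5 : 2 * Real.sqrt x ≤ x / 8 := by
      have hsq : Real.sqrt x * Real.sqrt x = x := Real.mul_self_sqrt hx0.le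
      have h6 : 16 * Real.sqrt x ≤ Real.sqrt x * Real.sqrt x :=
        mul_le_mul_of_nonneg_right hsqx (Real.sqrt_nonneg x)
      linarith
    linarith
  -- the target point in logarithmic coordinates
  set c : ℂ := Complex.log y with hc_def
  have hcre : c.re = -x := by rw [hc_def, Complex.log_re, hx_def]; ring
  have hcim : |c.im| < β := by rw [hc_def, Complex.log_im]; exact hy2
  -- the box B
  set B : Set ℂ := {w : ℂ | |w.re - c.re| ≤ x/2 ∧ |w.im - c.im| ≤ δ/2} with hB_def
  have hBclosed : IsClosed B := by
    have h1 : IsClosed {w : ℂ | |w.re - c.re| ≤ x/2} :=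
      isClosed_le (continuous_abs.comp (Complex.continuous_re.sub continuous_const))
        continuous_const
    have h2 : IsClosed {w : ℂ | |w.im - c.im| ≤ δ/2} :=
      isClosed_le (continuous_abs.comp (Complex.continuous_im.sub continuous_const))
        continuous_const
    exact h1.inter h2
  have hBc : c ∈ B := by
    constructor <;> simp <;> positivity
  have hBC : B ⊆ C := by
    intro w hw
    obtain ⟨h1, h2⟩ := hw
    have h1' := abs_le.1 h1
    have h2' := abs_le.1 h2
    have hcmabs := abs_le.1 hcim.le
    constructor
    · have : w.re ≤ -x/2 := by rw [hcre] at h1'; linarith [h1'.2]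
      linarith
    · rw [abs_lt]
      constructor <;> [linarith [h2'.1]; linarith [h2'.2]]
  -- bounds on points of B
  have hBre : ∀ w ∈ B, -(3*x/2) ≤ w.re ∧ w.re ≤ -x/2 := by
    intro w hw
    have h1' := abs_le.1 hw.1
    rw [hcre] at h1'
    constructor <;> linarith [h1'.1, h1'.2]
  have hBabs : ∀ w ∈ B, x/2 ≤ ‖w‖ ∧ ‖w‖ ≤ 2*x := by
    intro w hw
    obtain ⟨hl, hu⟩ := hBre w hw
    constructor
    · calc x/2 ≤ |w.re| := by rw [abs_of_nonpos (by linarith)]; linarith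
        _ ≤ ‖w‖ := Complex.abs_re_le_norm w
    · have him : |w.im| ≤ β + δ := by
        have h2' := abs_le.1 hw.2
        have hcmabs := abs_le.1 hcim.le
        rw [abs_le]
        constructor <;> [linarith [h2'.1]; linarith [h2'.2]]
      calc ‖w‖ ≤ |w.re| + |w.im| := Complex.norm_le_abs_re_add_abs_im w
        _ ≤ 3*x/2 + (β + δ) := by
            refine add_le_add ?_ him
            rw [abs_le]; constructor <;> linarith
        _ ≤ 2*x := by
            have : β + δ ≤ Real.pi := by linarith
            linarith
  have hBW : ∀ w ∈ B, w ∈ W := fun w hw => hCW (hBC hw)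
  have hBhre : ∀ w ∈ B, ‖hh w‖ ≤ x/8 + 4 := by
    intro w hw
    obtain ⟨ha1, ha2⟩ := hBabs w hw
    have hwne : w ≠ 0 := hWne w (hBW w hw)
    have h1 : ‖Complex.log (-w)‖ ≤ |Real.log (‖(-w)‖)| + Real.pi :=
      aux_norm_log_le (neg_ne_zero.2 hwne)
    rw [norm_neg] at h1
    have h2 : (0:ℝ) ≤ Real.log (‖w‖) := by
      apply Real.log_nonneg; linarith
    have h3 : Real.log (‖w‖) ≤ x/8 - 1 := by
      calc Real.log (‖w‖) ≤ Real.log (2*x) :=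
            Real.log_le_log (by linarith) ha2
        _ ≤ x/8 - 1 := hlog2x
    have h4 : ‖gg w‖ ≤ δ/100 := hgb w (hBW w hw)
    calc ‖hh w‖ ≤ ‖Complex.log (-w)‖ + ‖gg w‖ := norm_add_le _ _
      _ ≤ (|Real.log (‖w‖)| + Real.pi) + δ/100 := by linarith
      _ ≤ x/8 + 4 := by
          rw [abs_of_nonneg h2]; linarith
  have hBhim : ∀ w ∈ B, |(hh w).im| ≤ δ/2 := by
    intro w hw
    obtain ⟨ha1, ha2⟩ := hBabs w hw
    obtain ⟨hr1, hr2⟩ := hBre w hw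
    have him : |w.im| ≤ Real.pi := by
      have h2' := abs_le.1 hw.2
      have hcmabs := abs_le.1 hcim.le
      rw [abs_le]
      constructor <;> [linarith [h2'.1]; linarith [h2'.2]]
    have harg : |Complex.arg (-w)| ≤ 8 / (x/2) := by
      refine aux_arg_le (by linarith) ?_ ?_
      · simp only [Complex.neg_re]; linarith
      · simp only [Complex.neg_im, abs_neg]; exact him
    have h16 : (8:ℝ) / (x/2) = 16/x := by
      field_simp; norm_num
    have h4 : |(gg w).im| ≤ δ/100 := by
      have := hgb w (hBW w hw)
      calc |(gg w).im| ≤ ‖(gg w)‖ := Complex.abs_im_le_norm _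
        _ ≤ δ/100 := by exact this
    have h5 : (hh w).im = Complex.arg (-w) + (gg w).im := by
      rw [hhh_def]
      simp only [Complex.add_im]
      rw [Complex.log_im]
    rw [h5]
    calc |Complex.arg (-w) + (gg w).im| ≤ |Complex.arg (-w)| + |(gg w).im| := abs_add_le _ _
      _ ≤ 16/x + δ/100 := by rw [← h16]; exact add_le_add harg h4
      _ ≤ 2*δ/25 + δ/100 := by linarith
      _ ≤ δ/2 := by linarith
  -- the contraction T
  set T : ℂ → ℂ := fun w => c - hh w with hT_def
  have hTmaps : Set.MapsTo T B B := by
    intro w hw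
    constructor
    · have h1 : (T w).re - c.re = -(hh w).re := by
        rw [hT_def]; simp
      rw [h1, abs_neg]
      have : |(hh w).re| ≤ ‖hh w‖ := by
        exact Complex.abs_re_le_norm _
      have := this.trans (hBhre w hw)
      rw [abs_le] at this ⊢
      constructor <;> linarith [this.1, this.2]
    · have h1 : (T w).im - c.im = -(hh w).im := by
        rw [hT_def]; simp
      rw [h1, abs_neg]
      exact hBhim w hw
  have hBconv : Convex ℝ B := by
    have hset : B = ({w : ℂ | w.re ≤ c.re + x/2} ∩ {w : ℂ | c.re - x/2 ≤ w.re}) ∩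
        ({w : ℂ | w.im ≤ c.im + δ/2} ∩ {w : ℂ | c.im - δ/2 ≤ w.im}) := by
      ext w
      simp only [hB_def, Set.mem_setOf_eq, Set.mem_inter_iff, abs_le]
      constructor
      · rintro ⟨⟨a1, a2⟩, ⟨b1, b2⟩⟩
        exact ⟨⟨by linarith, by linarith⟩, ⟨by linarith, by linarith⟩⟩
      · rintro ⟨⟨a1, a2⟩, ⟨b1, b2⟩⟩
        exact ⟨⟨by linarith, by linarith⟩, ⟨by linarith, by linarith⟩⟩
    rw [hset]
    exact ((convex_halfSpace_re_le _).inter (convex_halfSpace_re_ge _)).inter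
      ((convex_halfSpace_im_le _).inter (convex_halfSpace_im_ge _))
  have hTlip : ∀ w₁ ∈ B, ∀ w₂ ∈ B, ‖T w₁ - T w₂‖ ≤ (1/20) * ‖w₁ - w₂‖ := by
    intro w₁ hw₁ w₂ hw₂
    have : T w₁ - T w₂ = hh w₂ - hh w₁ := by rw [hT_def]; ring
    rw [this, norm_sub_rev w₁ w₂]
    exact hLip w₂ (hBC hw₂) w₁ (hBC hw₁)
  have hcontr : ContractingWith (1/20 : NNReal) (hTmaps.restrict T B B) := by
    constructor
    · rw [show ((1:NNReal)/20 : NNReal) < 1 ↔ ((1/20 : NNReal) : ℝ) < 1 by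
        exact Iff.symm NNReal.coe_lt_one]
      norm_num
    · apply LipschitzWith.of_dist_le_mul
      rintro ⟨a, ha⟩ ⟨b, hb⟩
      have hval : dist (Set.MapsTo.restrict T B B hTmaps ⟨a, ha⟩)
          (Set.MapsTo.restrict T B B hTmaps ⟨b, hb⟩) = dist (T a) (T b) := rfl
      rw [hval, Subtype.dist_eq]
      simp only [dist_eq_norm]
      have := hTlip a ha b hb
      have hcoe : ((1/20 : NNReal) : ℝ) = 1/20 := by norm_num
      rw [hcoe]
      exact this
  obtain ⟨w₀, hw₀B, hfix, -, -⟩ :=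
    hcontr.exists_fixedPoint' hBclosed.isComplete hTmaps hBc (edist_ne_top _ _)
  have hw₀eq : w₀ + hh w₀ = c := by
    have : T w₀ = w₀ := hfix
    rw [hT_def] at this
    simp only [] at this
    linear_combination -this
  have hw₀C : w₀ ∈ C := hBC hw₀B
  have hw₀W : w₀ ∈ W := hCW hw₀C
  have hw₀im : |w₀.im| < β + δ := hw₀C.2
  -- the solution point
  refine ⟨Complex.exp w₀, ⟨?_, ?_⟩, ?_⟩
  · -- membership in Ddom ρ α
    refine ⟨norm_pos_iff.mpr (Complex.exp_ne_zero _), ?_, ?_⟩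
    · rw [Complex.norm_exp, hρ_def]
      apply Real.exp_lt_exp.2
      have := (hBre w₀ hw₀B).2
      linarith
    · rw [hWim w₀ hw₀W]
      calc |w₀.im| < β + δ := hw₀im
        _ < α := by linarith
  · -- ψ (exp w₀) = y
    rw [hψexp w₀ hw₀W, hw₀eq, hc_def]
    exact Complex.exp_log hyne
  · -- uniqueness
    rintro z ⟨⟨hz0, hzρ, hzα⟩, hzy⟩
    have hzne : z ≠ 0 := norm_ne_zero_iff.1 (ne_of_gt hz0)
    set w : ℂ := Complex.log z with hw_def
    have hexpw : Complex.exp w = z := Complex.exp_log hzne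
    have hwre : w.re < -M := by
      rw [hw_def, Complex.log_re]
      have := Real.log_lt_log hz0 hzρ
      rwa [hlogρ] at this
    have hwim : |w.im| < α := by
      rw [hw_def, Complex.log_im]; exact hzα
    have hwW : w ∈ W := by
      constructor
      · calc w.re < -M := hwre
          _ ≤ Real.log r - 4 := hM2
          _ < Real.log r := by linarith
      · exact hwim
    have hzexp : Complex.exp (w + hh w) = Complex.exp c := by
      rw [← hψexp w hwW, hexpw, hzy, hc_def, Complex.exp_log hyne]
    obtain ⟨n, hn⟩ := Complex.exp_eq_exp_iff_exists_int.1 hzexp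
    -- imaginary part bound of hh w
    have hhim : |(hh w).im| ≤ δ/10 := by
      have harg : |Complex.arg (-w)| ≤ 8 / M := by
        refine aux_arg_le hM0 ?_ ?_
        · simp only [Complex.neg_re]; linarith
        · simp only [Complex.neg_im, abs_neg]; linarith
      have h4 : |(gg w).im| ≤ δ/100 := by
        have := hgb w hwW
        calc |(gg w).im| ≤ ‖(gg w)‖ := Complex.abs_im_le_norm _
          _ ≤ δ/100 := by exact this
      have h5 : (hh w).im = Complex.arg (-w) + (gg w).im := by
        rw [hhh_def]
        simp only [Complex.add_im]
        rw [Complex.log_im]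
      have h8M : 8 / M ≤ δ / 25 := by
        rw [div_le_div_iff₀ hM0 (by norm_num)]
        have h200 : 200 ≤ M * δ := by
          have := hM1
          rw [div_le_iff₀ hδ0] at this
          linarith
        linarith
      rw [h5]
      calc |Complex.arg (-w) + (gg w).im| ≤ |Complex.arg (-w)| + |(gg w).im| := abs_add_le _ _
        _ ≤ δ/25 + δ/100 := add_le_add (harg.trans h8M) h4
        _ ≤ δ/10 := by linarith
    -- n must vanish
    have hnim : w.im + (hh w).im = c.im + n * (2 * Real.pi) := by
      have := congrArg Complex.im hn
      simpa [Complex.add_im, Complex.mul_im, Complex.mul_re] using this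
    have hn0 : n = 0 := by
      by_contra hne
      have h1 : (1:ℝ) ≤ |(n:ℝ)| := by
        rw [← Int.cast_abs]
        exact_mod_cast Int.one_le_abs (by exact_mod_cast hne)
      have h2 : |(n:ℝ)| * (2 * Real.pi) = |w.im + (hh w).im - c.im| := by
        rw [← abs_of_pos (show (0:ℝ) < 2*Real.pi by linarith), ← abs_mul]
        congr 1
        linarith [hnim]
      have h3 : |w.im + (hh w).im - c.im| ≤ |w.im| + |(hh w).im| + |c.im| := by
        calc |w.im + (hh w).im - c.im| ≤ |w.im + (hh w).im| + |c.im| := abs_sub _ _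
          _ ≤ |w.im| + |(hh w).im| + |c.im| := by
              linarith [abs_add_le w.im (hh w).im]
      have h4 : |w.im| + |(hh w).im| + |c.im| < 2 * Real.pi := by
        have : β ≤ Real.pi - 2*δ := by linarith
        calc |w.im| + |(hh w).im| + |c.im| < α + δ/10 + β := by
              linarith [hwim, hhim, hcim]
          _ < 2 * Real.pi := by linarith
      have h5 : 2 * Real.pi ≤ |(n:ℝ)| * (2 * Real.pi) := by
        have := mul_le_mul_of_nonneg_right h1 (show (0:ℝ) ≤ 2*Real.pi by linarith)
        linarith
      linarith [h2 ▸ h5, h3, h4]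
    rw [hn0] at hn
    simp only [Int.cast_zero, zero_mul, add_zero] at hn
    -- hence w lies in C and agrees with w₀
    have hwC : w ∈ C := by
      constructor
      · linarith
      · have : w.im = c.im - (hh w).im := by
          have := congrArg Complex.im hn
          simp only [Complex.add_im] at this
          linarith
        rw [this]
        have hcb := abs_le.1 hcim.le
        have hhb' := abs_le.1 hhim
        rw [abs_lt]
        constructor <;> [linarith [hcb.1, hhb'.2]; linarith [hcb.2, hhb'.1]]
    have hww₀ : w = w₀ := by
      have hdiff : w - w₀ = hh w₀ - hh w := by
        have h1 : w + hh w = c := hn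
        linear_combination h1 - hw₀eq
      have : ‖w - w₀‖ ≤ (1/20) * ‖w - w₀‖ := by
        calc ‖w - w₀‖ = ‖hh w₀ - hh w‖ := by rw [hdiff]
          _ ≤ (1/20) * ‖w₀ - w‖ := hLip w₀ hw₀C w hwC
          _ = (1/20) * ‖w - w₀‖ := by rw [norm_sub_rev]
      have hnn : (0:ℝ) ≤ ‖w - w₀‖ := norm_nonneg _
      have : ‖w - w₀‖ = 0 := by linarith
      have := norm_eq_zero.1 this
      exact sub_eq_zero.1 this
    rw [← hexpw, hww₀]
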